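/- For a language L_i ⊆ A_i* with A_i ⊆ A and consistent observability (A_o ∩ A_i = A_{i,o}), the inverse projection commutes with observation closure: O⁻¹(O(P_i⁻¹(L_i))) = P_i⁻¹(O_i⁻¹(O_i(L_i))), where O: A* → A_o*, O_i: A_i* → A_{i,o}*, and P_i: A* → A_i* are natural projections. -/

import Mathlib

/-- Natural projection erasing events outside `B`. -/
noncomputable def proj {A : Type*} (B : Set A) (w : List A) : List A :=
  w.filter (fun a => @decide (a ∈ B) (Classical.propDecidable _))

/-- Concatenation of a language with a single event from `B`. -/
def cat {A : Type*} (L : Set (List A)) (B : Set A) : Set (List A) :=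
  {w | ∃ u ∈ L, ∃ a ∈ B, w = u ++ [a]}

/-- A language is prefix-closed. -/
def prefixClosed {A : Type*} (L : Set (List A)) : Prop :=
  ∀ w ∈ L, ∀ u : List A, u <+: w → u ∈ L

/-- `K` is controllable with respect to `L` and uncontrollable events `Au`. -/
def controllable {A : Type*} (K L : Set (List A)) (Au : Set A) : Prop :=
  cat K Au ∩ L ⊆ K

/-- `K` is normal with respect to `L` and observable events `Ao`. -/
def normalLang {A : Type*} (Ao : Set A) (K L : Set (List A)) : Prop :=
  proj Ao ⁻¹' (proj Ao '' K) ∩ L ⊆ K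

/-- Supremal controllable sublanguage of `K` w.r.t. `L` and `Au`. -/
def supC {A : Type*} (K L : Set (List A)) (Au : Set A) : Set (List A) :=
  ⋃₀ {K' | K' ⊆ K ∧ controllable K' L Au}

/-- Supremal normal sublanguage of `K` w.r.t. `L` and `Ao`. -/
def supN {A : Type*} (Ao : Set A) (K L : Set (List A)) : Set (List A) :=
  ⋃₀ {K' | K' ⊆ K ∧ normalLang Ao K' L}


section Helpers

variable {A : Type*}

lemma proj_cons_mem (B : Set A) {a : A} (h : a ∈ B) (w : List A) :
    proj B (a :: w) = a :: proj B w := by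
  simp [proj, List.filter_cons, h]

lemma proj_cons_not_mem (B : Set A) {a : A} (h : a ∉ B) (w : List A) :
    proj B (a :: w) = proj B w := by
  simp [proj, List.filter_cons, h]

lemma proj_proj (B C : Set A) (w : List A) :
    proj B (proj C w) = proj (B ∩ C) w := by
  induction w with
  | nil => rfl
  | cons a w ih =>
    by_cases hC : a ∈ C
    · by_cases hB : a ∈ B
      · rw [proj_cons_mem C hC, proj_cons_mem B hB, proj_cons_mem (B ∩ C) ⟨hB, hC⟩, ih]
      · rw [proj_cons_mem C hC, proj_cons_not_mem B hB,
          proj_cons_not_mem (B ∩ C) (fun h => hB h.1), ih]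
    · rw [proj_cons_not_mem C hC, proj_cons_not_mem (B ∩ C) (fun h => hC h.2), ih]

lemma proj_eq_self (B : Set A) {w : List A} (h : ∀ a ∈ w, a ∈ B) :
    proj B w = w := by
  induction w with
  | nil => rfl
  | cons a w ih =>
    rw [proj_cons_mem B (h a (List.mem_cons_self)),
      ih (fun b hb => h b (List.mem_cons_of_mem _ hb))]

lemma proj_congr_of_subset (B C : Set A) {w : List A} (h : ∀ a ∈ w, a ∈ C) :
    proj B w = proj (B ∩ C) w := by
  induction w with
  | nil => rfl
  | cons a w ih =>
    have haC : a ∈ C := h a (List.mem_cons_self)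
    have ih' := ih (fun b hb => h b (List.mem_cons_of_mem _ hb))
    by_cases hB : a ∈ B
    · rw [proj_cons_mem B hB, proj_cons_mem (B ∩ C) ⟨hB, haC⟩, ih']
    · rw [proj_cons_not_mem B hB, proj_cons_not_mem (B ∩ C) (fun hh => hB hh.1), ih']

/-- Synchronization / merge lemma. -/
lemma merge_exists (Ai Ao : Set A) :
    ∀ u x : List A, (∀ a ∈ u, a ∈ Ai) → (∀ a ∈ x, a ∈ Ao) →
      proj Ao u = proj Ai x → ∃ v, proj Ai v = u ∧ proj Ao v = x := by
  intro u
  induction u with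
  | nil =>
    intro x _ hx hpx
    refine ⟨x, ?_, proj_eq_self Ao hx⟩
    induction x with
    | nil => rfl
    | cons b x ihx =>
      by_cases hb : b ∈ Ai
      · rw [proj_cons_mem Ai hb] at hpx; simp [proj] at hpx
      · rw [proj_cons_not_mem Ai hb] at hpx ⊢
        exact ihx (fun a ha => hx a (List.mem_cons_of_mem _ ha)) hpx
  | cons a u ihu =>
    intro x hu hx hpx
    have haAi : a ∈ Ai := hu a (List.mem_cons_self)
    have hu' : ∀ b ∈ u, b ∈ Ai := fun b hb => hu b (List.mem_cons_of_mem _ hb)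
    by_cases haAo : a ∈ Ao
    · -- a is observable: must appear at head of a synchronized position in x
      rw [proj_cons_mem Ao haAo] at hpx
      induction x with
      | nil => simp [proj] at hpx
      | cons b x ihx =>
        by_cases hb : b ∈ Ai
        · rw [proj_cons_mem Ai hb] at hpx
          obtain ⟨rfl, hpx'⟩ := List.cons.inj hpx
          obtain ⟨v, hv1, hv2⟩ := ihu x hu'
            (fun c hc => hx c (List.mem_cons_of_mem _ hc)) hpx'
          exact ⟨a :: v, by rw [proj_cons_mem Ai haAi, hv1],
            by rw [proj_cons_mem Ao haAo, hv2]⟩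
        · rw [proj_cons_not_mem Ai hb] at hpx
          obtain ⟨v, hv1, hv2⟩ := ihx (fun c hc => hx c (List.mem_cons_of_mem _ hc)) hpx
          refine ⟨b :: v, by rw [proj_cons_not_mem Ai hb, hv1], ?_⟩
          rw [proj_cons_mem Ao (hx b (List.mem_cons_self)), hv2]
    · rw [proj_cons_not_mem Ao haAo] at hpx
      obtain ⟨v, hv1, hv2⟩ := ihu x hu' hx hpx
      exact ⟨a :: v, by rw [proj_cons_mem Ai haAi, hv1],
        by rw [proj_cons_not_mem Ao haAo, hv2]⟩

end Helpers

/-- The inverse projection commutes with observation closure: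
`O⁻¹ O (P_i⁻¹ L_i) = P_i⁻¹ (O_i⁻¹ O_i L_i)` with `A_{i,o} = A_i ∩ A_o`. -/
theorem stmt13 {A : Type*} (Ai Ao : Set A) (Li : Set (List A))
    (hW : ∀ w ∈ Li, ∀ a ∈ w, a ∈ Ai) :
    proj Ao ⁻¹' (proj Ao '' (proj Ai ⁻¹' Li))
      = proj Ai ⁻¹' (proj (Ai ∩ Ao) ⁻¹' (proj (Ai ∩ Ao) '' Li)) := by
  ext w
  simp only [Set.mem_preimage, Set.mem_image]
  constructor
  · rintro ⟨v, hv, hvw⟩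
    refine ⟨proj Ai v, hv, ?_⟩
    rw [proj_proj, proj_proj]
    have h1 : proj (Ai ∩ Ao) v = proj Ai (proj Ao v) := by
      rw [proj_proj, Set.inter_comm]
    have h2 : proj (Ai ∩ Ao) w = proj Ai (proj Ao w) := by
      rw [proj_proj, Set.inter_comm]
    rw [show (Ai ∩ Ao) ∩ Ai = Ai ∩ Ao by rw [Set.inter_assoc, Set.inter_comm Ao Ai,
      ← Set.inter_assoc, Set.inter_self], h1, h2, hvw]
  · rintro ⟨u, hu, huw⟩
    have huAi : ∀ a ∈ u, a ∈ Ai := hW u hu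
    rw [proj_proj] at huw
    rw [show (Ai ∩ Ao) ∩ Ai = Ai ∩ Ao by rw [Set.inter_assoc, Set.inter_comm Ao Ai,
      ← Set.inter_assoc, Set.inter_self]] at huw
    -- proj Ao u = proj (Ai ∩ Ao) u = proj (Ai ∩ Ao) w = proj Ai (proj Ao w)
    have key : proj Ao u = proj Ai (proj Ao w) := by
      rw [proj_congr_of_subset Ao Ai huAi, Set.inter_comm Ao Ai, huw,
        proj_proj, Set.inter_comm]
    have hxAo : ∀ a ∈ proj Ao w, a ∈ Ao := by
      intro a ha
      simpa using (List.of_mem_filter ha)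
    obtain ⟨v, hv1, hv2⟩ := merge_exists Ai Ao u (proj Ao w) huAi hxAo key
    exact ⟨v, by rw [hv1]; exact hu, hv2⟩
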